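/- Let x_1, ..., x_n ∈ [a,b] be a finite population with mean μ = (1/n)·Σ_j x_j, and let X_1, ..., X_l be a uniformly random sample of size l drawn without replacement. Then for all t > 0, Pr(|Σ_{i=1}^l X_i − l·μ| ≥ l·t) ≤ 2·exp(−2·l·t² / (b−a)²). -/

import Mathlib

open MeasureTheory Finset

namespace HoeffdingWR
noncomputable section
open Real

variable {n : ℕ}


lemma core (p : ℝ) (hp0 : 0 ≤ p) (hp1 : p ≤ 1) (h : ℝ) :
    1 - p + p * exp h ≤ exp (p * h + h ^ 2 / 8) := by
  set D : ℝ → ℝ := fun z => 1 - p + p * exp z with hDdef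
  have hDpos : ∀ z, 0 < D z := by
    intro z
    have h2 : 0 ≤ p * exp z := mul_nonneg hp0 (exp_pos z).le
    rcases eq_or_lt_of_le hp1 with h1 | h1
    · have : 0 < p * exp z := by rw [h1]; simpa using exp_pos z
      simp only [hDdef]; linarith
    · simp only [hDdef]; nlinarith
  set u : ℝ → ℝ := fun z => p * exp z / D z with hudef
  set g' : ℝ → ℝ := fun z => p + z / 4 - u z with hg'def
  set g : ℝ → ℝ := fun z => p * z + z ^ 2 / 8 - log (D z) with hgdef
  have hD' : ∀ z, HasDerivAt D (p * exp z) z := fun z =>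
    ((Real.hasDerivAt_exp z).const_mul p).const_add (1 - p)
  have hg : ∀ z, HasDerivAt g (g' z) z := by
    intro z
    have h1 : HasDerivAt (fun z : ℝ => p * z + z ^ 2 / 8) (p + z / 4) z := by
      have := ((hasDerivAt_id z).const_mul p).add ((hasDerivAt_pow 2 z).div_const 8)
      refine this.congr_deriv ?_
      simp; ring
    have h2 : HasDerivAt (fun z => log (D z)) (p * exp z / D z) z :=
      (hD' z).log (hDpos z).ne'
    exact h1.sub h2
  have hu : ∀ z, HasDerivAt u (u z - (u z) ^ 2) z := by
    intro z
    have := ((Real.hasDerivAt_exp z).const_mul p).div (hD' z) (hDpos z).ne'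
    refine this.congr_deriv ?_
    have hz := (hDpos z).ne'
    simp only [hudef]
    field_simp
  have hg' : ∀ z, HasDerivAt g' (1 / 4 - (u z - (u z) ^ 2)) z := by
    intro z
    have h1 : HasDerivAt (fun z : ℝ => p + z / 4) (1 / 4) z := by
      simpa using ((hasDerivAt_id z).div_const 4).const_add p
    exact h1.sub (hu z)
  have mono_g' : Monotone g' := by
    apply monotone_of_deriv_nonneg (fun z => (hg' z).differentiableAt)
    intro z
    rw [(hg' z).deriv]
    nlinarith [sq_nonneg (u z - 1 / 2)]
  have hD0 : D 0 = 1 := by simp [hDdef]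
  have g'0 : g' 0 = 0 := by simp [hg'def, hudef, hD0]
  have g0 : g 0 = 0 := by simp [hgdef, hD0]
  have hdg : Differentiable ℝ g := fun z => (hg z).differentiableAt
  have hgc : Continuous g := hdg.continuous
  have key : 0 ≤ g h := by
    rcases le_total 0 h with hh | hh
    · have mono : MonotoneOn g (Set.Ici 0) := by
        apply monotoneOn_of_deriv_nonneg (convex_Ici 0) hgc.continuousOn
        · intro z _; exact (hg z).differentiableAt.differentiableWithinAt
        · intro z hz
          rw [(hg z).deriv]
          have hz0 : (0 : ℝ) ≤ z := le_of_lt (by simpa using hz)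
          calc (0:ℝ) = g' 0 := g'0.symm
            _ ≤ g' z := mono_g' hz0
      have := mono (Set.mem_Ici.2 le_rfl) (Set.mem_Ici.2 hh) hh
      rwa [g0] at this
    · have anti : AntitoneOn g (Set.Iic 0) := by
        apply antitoneOn_of_deriv_nonpos (convex_Iic 0) hgc.continuousOn
        · intro z _; exact (hg z).differentiableAt.differentiableWithinAt
        · intro z hz
          rw [(hg z).deriv]
          have hz0 : z ≤ (0 : ℝ) := le_of_lt (by simpa using hz)
          calc g' z ≤ g' 0 := mono_g' hz0
            _ = 0 := g'0
      have := anti (Set.mem_Iic.2 hh) (Set.mem_Iic.2 le_rfl) hh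
      rwa [g0] at this
  have key2 : 0 ≤ p * h + h ^ 2 / 8 - log (D h) := key
  have hlog : log (D h) ≤ p * h + h ^ 2 / 8 := by linarith
  calc 1 - p + p * exp h = D h := rfl
    _ = exp (log (D h)) := (exp_log (hDpos h)).symm
    _ ≤ exp (p * h + h ^ 2 / 8) := exp_le_exp.2 hlog

lemma hoeff_sum_exp {n : ℕ} (hn : 0 < n) (a b : ℝ) (hab : a < b) (x : Fin n → ℝ)
    (hx : ∀ j, x j ∈ Set.Icc a b) (μ : ℝ) (hμ : μ = (1 / (n : ℝ)) * ∑ j, x j) (s : ℝ) :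
    ∑ j, exp (s * x j) ≤ n * exp (s * μ + s ^ 2 * (b - a) ^ 2 / 8) := by
  have hba : 0 < b - a := sub_pos.2 hab
  have hnR : (0:ℝ) < n := Nat.cast_pos.2 hn
  have hsum : ∑ j, x j = (n:ℝ) * μ := by rw [hμ]; field_simp
  have hna : (n:ℝ) * a ≤ ∑ j, x j := by
    calc (n:ℝ) * a = ∑ _j : Fin n, a := by simp [mul_comm]
      _ ≤ ∑ j, x j := Finset.sum_le_sum fun j _ => (hx j).1
  have hnb : ∑ j, x j ≤ (n:ℝ) * b := by
    calc ∑ j, x j ≤ ∑ _j : Fin n, b := Finset.sum_le_sum fun j _ => (hx j).2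
      _ = (n:ℝ) * b := by simp [mul_comm]
  have hμa : a ≤ μ := by rw [hsum] at hna; nlinarith
  have hμb : μ ≤ b := by rw [hsum] at hnb; nlinarith
  set p : ℝ := (μ - a) / (b - a) with hp
  have hp0 : 0 ≤ p := div_nonneg (by linarith) hba.le
  have hp1 : p ≤ 1 := (div_le_one hba).2 (by linarith)
  have hpt : ∀ j, exp (s * x j) ≤
      (b - x j) / (b - a) * exp (s * a) + (x j - a) / (b - a) * exp (s * b) := by
    intro j
    have h1 : 0 ≤ (b - x j) / (b - a) := div_nonneg (by linarith [(hx j).2]) hba.le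
    have h2 : 0 ≤ (x j - a) / (b - a) := div_nonneg (by linarith [(hx j).1]) hba.le
    have h3 : (b - x j) / (b - a) + (x j - a) / (b - a) = 1 := by field_simp; ring
    have hcx := convexOn_exp.2 (Set.mem_univ (s * a)) (Set.mem_univ (s * b)) h1 h2 h3
    have harg : (b - x j)/(b-a) * (s*a) + (x j - a)/(b-a) * (s*b) = s * x j := by
      field_simp; ring
    rw [smul_eq_mul, smul_eq_mul, smul_eq_mul, smul_eq_mul, harg] at hcx
    exact hcx
  have hsum2 : ∑ j, exp (s * x j) ≤ (n:ℝ) * ((1 - p) * exp (s*a) + p * exp (s*b)) := by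
    calc ∑ j, exp (s * x j)
        ≤ ∑ j, ((b - x j)/(b-a) * exp (s*a) + (x j - a)/(b-a) * exp (s*b)) :=
          Finset.sum_le_sum fun j _ => hpt j
      _ = (∑ j, (b - x j)) * (exp (s*a)/(b-a)) + (∑ j, (x j - a)) * (exp (s*b)/(b-a)) := by
          rw [Finset.sum_add_distrib, ← Finset.sum_mul, ← Finset.sum_mul,
            ← Finset.sum_div, ← Finset.sum_div]
          ring
      _ = ((n:ℝ)*b - n*μ) * (exp (s*a)/(b-a)) + ((n:ℝ)*μ - n*a) * (exp (s*b)/(b-a)) := by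
          rw [Finset.sum_sub_distrib, Finset.sum_sub_distrib, hsum]
          simp [mul_comm]
      _ = (n:ℝ) * ((1 - p) * exp (s*a) + p * exp (s*b)) := by
          rw [hp]; field_simp; ring
  have hcore := core p hp0 hp1 (s * (b - a))
  have e1 : exp (s*a) * exp (s*(b-a)) = exp (s*b) := by
    rw [← exp_add]; congr 1; ring
  have hkey : (1 - p) * exp (s*a) + p * exp (s*b) ≤ exp (s*μ + s^2*(b-a)^2/8) := by
    calc (1-p) * exp (s*a) + p * exp (s*b)
        = exp (s*a) * (1 - p + p * exp (s*(b-a))) := by rw [← e1]; ring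
      _ ≤ exp (s*a) * exp (p*(s*(b-a)) + (s*(b-a))^2/8) :=
          mul_le_mul_of_nonneg_left hcore (exp_pos _).le
      _ = exp (s*μ + s^2*(b-a)^2/8) := by
          rw [← exp_add]; congr 1; rw [hp]; field_simp; ring
  exact hsum2.trans (mul_le_mul_of_nonneg_left hkey hnR.le)


def es (y : Fin n → ℝ) (k : ℕ) (S : Finset (Fin n)) : ℝ :=
  ∑ T ∈ S.powersetCard k, ∏ j ∈ T, y j

lemma es_nonneg (y : Fin n → ℝ) (hy : ∀ j, 0 ≤ y j) (k : ℕ) (S : Finset (Fin n)) :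
    0 ≤ es y k S :=
  Finset.sum_nonneg fun _ _ => Finset.prod_nonneg fun j _ => hy j

lemma es_zero (y : Fin n → ℝ) (S : Finset (Fin n)) : es y 0 S = 1 := by
  simp [es]

lemma es_insert (y : Fin n → ℝ) (k : ℕ) {j : Fin n} {S : Finset (Fin n)} (hj : j ∉ S) :
    es y (k + 1) (insert j S) = es y (k + 1) S + y j * es y k S := by
  classical
  have hdisj : Disjoint (S.powersetCard (k + 1)) ((S.powersetCard k).image (insert j)) := by
    rw [Finset.disjoint_right]
    intro U hU hU'
    obtain ⟨T, _, rfl⟩ := Finset.mem_image.1 hU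
    exact hj ((Finset.mem_powersetCard.1 hU').1 (Finset.mem_insert_self j T))
  have hinj : ∀ T1 ∈ S.powersetCard k, ∀ T2 ∈ S.powersetCard k,
      insert j T1 = insert j T2 → T1 = T2 := by
    intro T1 h1 T2 h2 he
    have hj1 : j ∉ T1 := fun hm => hj ((Finset.mem_powersetCard.1 h1).1 hm)
    have hj2 : j ∉ T2 := fun hm => hj ((Finset.mem_powersetCard.1 h2).1 hm)
    rw [← Finset.erase_insert hj1, ← Finset.erase_insert hj2, he]
  rw [es, Finset.powersetCard_succ_insert hj, Finset.sum_union hdisj]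
  congr 1
  rw [Finset.sum_image hinj, es, Finset.mul_sum]
  apply Finset.sum_congr rfl
  intro T hT
  have hjT : j ∉ T := fun hm => hj ((Finset.mem_powersetCard.1 hT).1 hm)
  rw [Finset.prod_insert hjT]

lemma sum_erase_es (y : Fin n → ℝ) (k : ℕ) :
    ∑ j, y j * es y k (univ.erase j) = (k + 1 : ℝ) * es y (k + 1) univ := by
  classical
  have lhs_eq : ∑ j, y j * es y k (univ.erase j)
      = ∑ p ∈ (univ : Finset (Fin n)).sigma (fun j => (univ.erase j).powersetCard k),
          ∏ t ∈ insert p.1 p.2, y t := by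
    rw [Finset.sum_sigma]
    apply Finset.sum_congr rfl
    intro j _
    rw [es, Finset.mul_sum]
    apply Finset.sum_congr rfl
    intro T hT
    have hjT : j ∉ T := fun hm =>
      Finset.notMem_erase j univ ((Finset.mem_powersetCard.1 hT).1 hm)
    rw [Finset.prod_insert hjT]
  have rhs_eq : (k + 1 : ℝ) * es y (k + 1) univ
      = ∑ q ∈ ((univ : Finset (Fin n)).powersetCard (k + 1)).sigma (fun U => U),
          ∏ t ∈ q.1, y t := by
    rw [Finset.sum_sigma, es, Finset.mul_sum]
    apply Finset.sum_congr rfl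
    intro U hU
    dsimp only
    rw [Finset.sum_const, nsmul_eq_mul, (Finset.mem_powersetCard.1 hU).2]
    push_cast
    ring
  rw [lhs_eq, rhs_eq]
  apply Finset.sum_nbij' (fun p => (⟨insert p.1 p.2, p.1⟩ : (_ : Finset (Fin n)) × Fin n))
    (fun q => (⟨q.2, q.1.erase q.2⟩ : (j : Fin n) × Finset (Fin n)))
  · intro p hp
    obtain ⟨_, hp2⟩ := Finset.mem_sigma.1 hp
    obtain ⟨hsub, hcard⟩ := Finset.mem_powersetCard.1 hp2
    have hnm : p.1 ∉ p.2 := fun hm => Finset.notMem_erase p.1 univ (hsub hm)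
    refine Finset.mem_sigma.2 ⟨Finset.mem_powersetCard.2 ⟨Finset.subset_univ _, ?_⟩,
      Finset.mem_insert_self _ _⟩
    rw [Finset.card_insert_of_notMem hnm, hcard]
  · intro q hq
    obtain ⟨hq1, hq2⟩ := Finset.mem_sigma.1 hq
    obtain ⟨_, hcard⟩ := Finset.mem_powersetCard.1 hq1
    refine Finset.mem_sigma.2 ⟨Finset.mem_univ _, Finset.mem_powersetCard.2 ⟨?_, ?_⟩⟩
    · exact Finset.erase_subset_erase _ (Finset.subset_univ _)
    · rw [Finset.card_erase_of_mem hq2, hcard]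
      rfl
  · intro p hp
    obtain ⟨_, hp2⟩ := Finset.mem_sigma.1 hp
    have hnm : p.1 ∉ p.2 := fun hm =>
      Finset.notMem_erase p.1 univ ((Finset.mem_powersetCard.1 hp2).1 hm)
    cases p with
    | mk j T => simp [Finset.erase_insert, hnm]
  · intro q hq
    obtain ⟨_, hq2⟩ := Finset.mem_sigma.1 hq
    cases q with
    | mk U j => simp [Finset.insert_erase, hq2]
  · intro p _
    rfl

lemma monov (y : Fin n → ℝ) (hy : ∀ j, 0 ≤ y j) (k : ℕ) :
    Monovary (fun j => y j * es y k (univ.erase j)) y := by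
  intro i j hij
  have hne : j ≠ i := fun h => absurd hij (by rw [h]; exact lt_irrefl _)
  cases k with
  | zero => simp only [es_zero, mul_one]; exact hij.le
  | succ m =>
    set W : Finset (Fin n) := (univ.erase i).erase j with hW
    have hiW : i ∉ W := fun hm => Finset.notMem_erase i univ (Finset.mem_of_mem_erase hm)
    have hjW : j ∉ W := Finset.notMem_erase _ _
    have h1 : univ.erase i = insert j W :=
      (Finset.insert_erase (Finset.mem_erase.2 ⟨hne, Finset.mem_univ j⟩)).symm
    have h2 : univ.erase j = insert i ((univ.erase j).erase i) :=
      (Finset.insert_erase (Finset.mem_erase.2 ⟨fun h => hne h.symm, Finset.mem_univ i⟩)).symm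
    have hWc : (univ.erase j).erase i = W := by rw [hW, Finset.erase_right_comm]
    rw [hWc] at h2
    have e1 : es y (m+1) (univ.erase i) = es y (m+1) W + y j * es y m W := by
      rw [h1, es_insert y m hjW]
    have e2 : es y (m+1) (univ.erase j) = es y (m+1) W + y i * es y m W := by
      rw [h2, es_insert y m hiW]
    simp only [e1, e2]
    nlinarith [es_nonneg y hy (m+1) W, es_nonneg y hy m W, hij.le, hy i, hy j]

lemma step_ineq (y : Fin n → ℝ) (hy : ∀ j, 0 ≤ y j) (k : ℕ) :
    (n : ℝ) * ((k + 1 : ℝ) * es y (k + 1) univ) ≤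
      ((n : ℝ) - k) * ((∑ j, y j) * es y k univ) := by
  classical
  cases k with
  | zero =>
    have h0 := sum_erase_es y 0
    simp only [es_zero, mul_one] at h0 ⊢
    rw [← h0]
    push_cast
    ring_nf
    exact le_refl _
  | succ m =>
    have hrec := sum_erase_es y (m + 1)
    have hb := sum_erase_es y m
    have hsplit : ∀ j : Fin n, es y (m + 1) (univ.erase j)
        = es y (m + 1) univ - y j * es y m (univ.erase j) := by
      intro j
      have hu : (univ : Finset (Fin n)) = insert j (univ.erase j) :=
        (Finset.insert_erase (Finset.mem_univ j)).symm
      have := es_insert y m (Finset.notMem_erase j univ)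
      rw [← hu] at this
      linarith [this]
    have h1 : (∑ j, y j * es y (m + 1) (univ.erase j))
        = (∑ j, y j) * es y (m + 1) univ - ∑ j, y j * (y j * es y m (univ.erase j)) := by
      have hterm : ∀ j : Fin n, y j * es y (m + 1) (univ.erase j)
          = y j * es y (m + 1) univ - y j * (y j * es y m (univ.erase j)) := by
        intro j; rw [hsplit j]; ring
      rw [Finset.sum_congr rfl fun j _ => hterm j, Finset.sum_sub_distrib, ← Finset.sum_mul]
    have cheb := ((monov y hy m).monovaryOn ↑(univ : Finset (Fin n))).sum_mul_sum_le_card_mul_sum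
    push_cast at hrec
    rw [h1] at hrec
    rw [hb] at cheb
    have hcard : ((#(univ : Finset (Fin n)) : ℕ) : ℝ) = (n : ℝ) := by simp
    rw [hcard] at cheb
    have hQ : ∑ i : Fin n, y i * es y m (univ.erase i) * y i
        = ∑ j : Fin n, y j * (y j * es y m (univ.erase j)) :=
      Finset.sum_congr rfl fun j _ => by ring
    rw [hQ] at cheb
    have hrecn := congrArg (fun z => (n : ℝ) * z) hrec
    beta_reduce at hrecn
    push_cast
    nlinarith [hrecn, cheb]
  

lemma maclaurin (y : Fin n → ℝ) (hy : ∀ j, 0 ≤ y j) (k : ℕ) (hk : k ≤ n) :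
    (n : ℝ) ^ k * es y k univ ≤ (n.choose k : ℝ) * (∑ j, y j) ^ k := by
  revert hk
  induction k with
  | zero => intro _; simp [es_zero]
  | succ m ih =>
    intro hk
    have hmn : m ≤ n := Nat.le_of_succ_le hk
    have IH := ih hmn
    have hT : (0:ℝ) ≤ ∑ j, y j := Finset.sum_nonneg fun j _ => hy j
    have hmnR : (m:ℝ) ≤ n := by exact_mod_cast hmn
    have hnm : (0:ℝ) ≤ (n:ℝ) - m := by linarith
    have hs := step_ineq y hy m
    have hpow : (0:ℝ) ≤ (n:ℝ)^m := by positivity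
    have hchoose : ((n:ℝ) - m) * (n.choose m : ℝ) = ((m:ℝ)+1) * (n.choose (m+1) : ℝ) := by
      have h := Nat.choose_succ_right_eq n m
      have h2 := congrArg (fun z : ℕ => (z : ℝ)) h
      push_cast [Nat.cast_sub hmn] at h2
      linarith
    have key : ((m:ℝ)+1) * ((n:ℝ)^(m+1) * es y (m+1) univ)
        ≤ ((m:ℝ)+1) * ((n.choose (m+1) : ℝ) * (∑ j, y j)^(m+1)) := by
      calc ((m:ℝ)+1) * ((n:ℝ)^(m+1) * es y (m+1) univ)
          = (n:ℝ)^m * ((n:ℝ) * (((m:ℝ)+1) * es y (m+1) univ)) := by ring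
        _ ≤ (n:ℝ)^m * (((n:ℝ) - m) * ((∑ j, y j) * es y m univ)) :=
            mul_le_mul_of_nonneg_left hs hpow
        _ = ((n:ℝ) - m) * (∑ j, y j) * ((n:ℝ)^m * es y m univ) := by ring
        _ ≤ ((n:ℝ) - m) * (∑ j, y j) * ((n.choose m : ℝ) * (∑ j, y j)^m) :=
            mul_le_mul_of_nonneg_left IH (mul_nonneg hnm hT)
        _ = (((n:ℝ) - m) * (n.choose m : ℝ)) * ((∑ j, y j)^(m+1)) := by ring
        _ = ((m:ℝ)+1) * ((n.choose (m+1) : ℝ) * (∑ j, y j)^(m+1)) := by rw [hchoose]; ring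
    have hpos : (0:ℝ) < (m:ℝ)+1 := by positivity
    exact le_of_mul_le_mul_left key hpos

lemma embed_sum (l : ℕ) (y : Fin n → ℝ) :
    ∑ σ : Fin l ↪ Fin n, ∏ i, y (σ i) = (l.factorial : ℝ) * es y l univ := by
  classical
  have hfiber : ∀ T ∈ (univ : Finset (Fin n)).powersetCard l,
      (univ.filter fun σ : Fin l ↪ Fin n => Finset.map σ univ = T).card = l.factorial := by
    intro T hT
    have hcard : T.card = l := (Finset.mem_powersetCard.1 hT).2
    let e : {σ : Fin l ↪ Fin n // Finset.map σ univ = T} ≃ (Fin l ↪ {x // x ∈ T}) :=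
      { toFun := fun σp => Function.Embedding.codRestrict {x | x ∈ T} σp.1
          (fun i => by
            have h := Finset.mem_map_of_mem σp.1 (Finset.mem_univ i)
            rw [σp.2] at h
            exact h)
        invFun := fun τ => ⟨τ.trans (Function.Embedding.subtype _), by
          apply Finset.eq_of_subset_of_card_le
          · intro x hx
            obtain ⟨i, _, rfl⟩ := Finset.mem_map.1 hx
            exact (τ i).2
          · rw [Finset.card_map, Finset.card_univ, Fintype.card_fin, hcard]⟩
        left_inv := fun σp => Subtype.ext (by ext i; rfl)
        right_inv := fun τ => by ext i; rfl }
    calc (univ.filter fun σ : Fin l ↪ Fin n => Finset.map σ univ = T).card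
        = Fintype.card {σ : Fin l ↪ Fin n // Finset.map σ univ = T} :=
          (Fintype.card_subtype _).symm
      _ = Fintype.card (Fin l ↪ {x // x ∈ T}) := Fintype.card_congr e
      _ = (Fintype.card {x // x ∈ T}).descFactorial (Fintype.card (Fin l)) :=
          Fintype.card_embedding_eq
      _ = l.factorial := by
          rw [Fintype.card_coe, hcard, Fintype.card_fin, Nat.descFactorial_self]
  have hmaps : ∀ σ : Fin l ↪ Fin n, σ ∈ (univ : Finset (Fin l ↪ Fin n)) →
      Finset.map σ univ ∈ (univ : Finset (Fin n)).powersetCard l := by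
    intro σ _
    exact Finset.mem_powersetCard.2 ⟨Finset.subset_univ _,
      by rw [Finset.card_map, Finset.card_univ, Fintype.card_fin]⟩
  calc ∑ σ : Fin l ↪ Fin n, ∏ i, y (σ i)
      = ∑ σ : Fin l ↪ Fin n, ∏ j ∈ Finset.map σ univ, y j := by
        exact Finset.sum_congr rfl fun σ _ => (Finset.prod_map univ σ y).symm
    _ = ∑ T ∈ (univ : Finset (Fin n)).powersetCard l,
          ∑ σ ∈ univ.filter fun σ : Fin l ↪ Fin n => Finset.map σ univ = T,
            ∏ j ∈ Finset.map σ univ, y j :=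
        (Finset.sum_fiberwise_of_maps_to hmaps _).symm
    _ = ∑ T ∈ (univ : Finset (Fin n)).powersetCard l, (l.factorial : ℝ) * ∏ j ∈ T, y j := by
        apply Finset.sum_congr rfl
        intro T hT
        rw [Finset.sum_congr rfl (fun σ hσ => by rw [(Finset.mem_filter.1 hσ).2]),
          Finset.sum_const, hfiber T hT, nsmul_eq_mul]
    _ = (l.factorial : ℝ) * es y l univ := by rw [es, ← Finset.mul_sum]

lemma one_side (n l : ℕ) (hn : 0 < n) (hl : 0 < l) (hln : l ≤ n) (a b : ℝ) (hab : a < b)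
    (x : Fin n → ℝ) (hx : ∀ j, x j ∈ Set.Icc a b) (μ : ℝ)
    (hμ : μ = (1 / (n : ℝ)) * ∑ j, x j) (t : ℝ) (ht : 0 < t)
    [DecidablePred fun σ : Fin l ↪ Fin n => (l : ℝ) * t ≤ (∑ i, x (σ i)) - (l : ℝ) * μ] :
    ((univ.filter fun σ : Fin l ↪ Fin n =>
        (l : ℝ) * t ≤ (∑ i, x (σ i)) - (l : ℝ) * μ).card : ℝ) ≤
      (n.descFactorial l : ℝ) * Real.exp (-2 * (l : ℝ) * t ^ 2 / (b - a) ^ 2) := by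
  classical
  have hba : 0 < b - a := sub_pos.2 hab
  have hnR : (0:ℝ) < n := Nat.cast_pos.2 hn
  set s : ℝ := 4 * t / (b - a) ^ 2 with hs
  have hs0 : 0 < s := by positivity
  set A := univ.filter fun σ : Fin l ↪ Fin n =>
    (l : ℝ) * t ≤ (∑ i, x (σ i)) - (l : ℝ) * μ with hA
  have chern : (A.card : ℝ) * Real.exp (s * ((l:ℝ) * t))
      ≤ ∑ σ : Fin l ↪ Fin n, Real.exp (s * ((∑ i, x (σ i)) - (l:ℝ) * μ)) := by
    calc (A.card : ℝ) * Real.exp (s * ((l:ℝ)*t))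
        = ∑ _σ ∈ A, Real.exp (s * ((l:ℝ)*t)) := by rw [Finset.sum_const, nsmul_eq_mul]
      _ ≤ ∑ σ ∈ A, Real.exp (s * ((∑ i, x (σ i)) - (l:ℝ)*μ)) := by
          apply Finset.sum_le_sum
          intro σ hσ
          exact Real.exp_le_exp.2
            (mul_le_mul_of_nonneg_left (Finset.mem_filter.1 hσ).2 hs0.le)
      _ ≤ ∑ σ : Fin l ↪ Fin n, Real.exp (s * ((∑ i, x (σ i)) - (l:ℝ)*μ)) :=
          Finset.sum_le_sum_of_subset_of_nonneg (Finset.subset_univ A)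
            (fun σ _ _ => (Real.exp_pos _).le)
  set y : Fin n → ℝ := fun j => Real.exp (s * x j) with hy
  have hy0 : ∀ j, 0 ≤ y j := fun j => (Real.exp_pos _).le
  have hT0 : (0:ℝ) ≤ ∑ j, y j := Finset.sum_nonneg fun j _ => hy0 j
  have hmgf : ∑ σ : Fin l ↪ Fin n, Real.exp (s * ((∑ i, x (σ i)) - (l:ℝ)*μ))
      = Real.exp (-(s * ((l:ℝ)*μ))) * ((l.factorial : ℝ) * es y l univ) := by
    rw [← embed_sum l y, Finset.mul_sum]
    apply Finset.sum_congr rfl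
    intro σ _
    calc Real.exp (s * ((∑ i, x (σ i)) - (l:ℝ)*μ))
        = Real.exp (-(s * ((l:ℝ)*μ)) + ∑ i, s * x (σ i)) := by
          congr 1
          rw [← Finset.mul_sum]
          ring
      _ = Real.exp (-(s * ((l:ℝ)*μ))) * ∏ i, y (σ i) := by
          rw [Real.exp_add, Real.exp_sum]
  set E : ℝ := Real.exp (s * μ + s ^ 2 * (b - a) ^ 2 / 8) with hE
  have hes : es y l univ ≤ (n.choose l : ℝ) * E ^ l := by
    have h2 : (n:ℝ)^l * es y l univ ≤ (n:ℝ)^l * ((n.choose l : ℝ) * E^l) := by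
      calc (n:ℝ)^l * es y l univ ≤ (n.choose l : ℝ) * (∑ j, y j)^l := maclaurin y hy0 l hln
        _ ≤ (n.choose l : ℝ) * ((n:ℝ)*E)^l := by
            apply mul_le_mul_of_nonneg_left _ (Nat.cast_nonneg _)
            exact pow_le_pow_left₀ hT0 (hoeff_sum_exp hn a b hab x hx μ hμ s) l
        _ = (n:ℝ)^l * ((n.choose l : ℝ) * E^l) := by rw [mul_pow]; ring
    exact le_of_mul_le_mul_left h2 (pow_pos hnR l)
  have hdesc : (l.factorial : ℝ) * (n.choose l : ℝ) = (n.descFactorial l : ℝ) := by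
    exact_mod_cast (Nat.descFactorial_eq_factorial_mul_choose n l).symm
  have hexp : -(s * ((l:ℝ)*μ)) + (l:ℝ) * (s * μ + s ^ 2 * (b - a) ^ 2 / 8) + -(s * ((l:ℝ)*t))
      = -2 * (l:ℝ) * t ^ 2 / (b - a) ^ 2 := by
    rw [hs]
    field_simp
    ring
  calc (A.card : ℝ)
      = ((A.card : ℝ) * Real.exp (s * ((l:ℝ)*t))) * Real.exp (-(s * ((l:ℝ)*t))) := by
        rw [mul_assoc, ← Real.exp_add]
        simp
    _ ≤ (Real.exp (-(s * ((l:ℝ)*μ))) * ((l.factorial : ℝ) * es y l univ))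
          * Real.exp (-(s * ((l:ℝ)*t))) := by
        apply mul_le_mul_of_nonneg_right _ (Real.exp_pos _).le
        rw [← hmgf]
        exact chern
    _ ≤ (Real.exp (-(s * ((l:ℝ)*μ))) * ((l.factorial : ℝ) * ((n.choose l : ℝ) * E ^ l)))
          * Real.exp (-(s * ((l:ℝ)*t))) := by
        apply mul_le_mul_of_nonneg_right _ (Real.exp_pos _).le
        apply mul_le_mul_of_nonneg_left _ (Real.exp_pos _).le
        exact mul_le_mul_of_nonneg_left hes (Nat.cast_nonneg _)
    _ = (n.descFactorial l : ℝ) * Real.exp (-2 * (l:ℝ) * t ^ 2 / (b - a) ^ 2) := by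
        rw [← hdesc, hE, ← Real.exp_nat_mul, ← hexp,
          Real.exp_add, Real.exp_add]
        ring

end
end HoeffdingWR

open HoeffdingWR Real
open scoped ENNReal

theorem hoeffding_without_replacement (n l : ℕ) (hn : 0 < n) (hl : 0 < l)
    (hln : l ≤ n) (a b : ℝ) (x : Fin n → ℝ) (hx : ∀ j, x j ∈ Set.Icc a b)
    (μ : ℝ) (hμ : μ = (1 / (n : ℝ)) * ∑ j, x j) (t : ℝ) (ht : 0 < t) :
    haveI : MeasurableSpace (Fin l ↪ Fin n) := ⊤
    haveI : Nonempty (Fin l ↪ Fin n) := ⟨Fin.castLEEmb hln⟩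
    ((PMF.uniformOfFintype (Fin l ↪ Fin n)).toMeasure
        {σ | (l : ℝ) * t ≤ |(∑ i, x (σ i)) - (l : ℝ) * μ|}) ≤
      ENNReal.ofReal (2 * Real.exp (-2 * (l : ℝ) * t ^ 2 / (b - a) ^ 2)) := by
  classical
  letI : MeasurableSpace (Fin l ↪ Fin n) := ⊤
  haveI : Nonempty (Fin l ↪ Fin n) := ⟨Fin.castLEEmb hln⟩
  have hab0 : a ≤ b := le_trans (hx ⟨0, hn⟩).1 (hx ⟨0, hn⟩).2
  rcases eq_or_lt_of_le hab0 with heq | hab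
  · -- degenerate case a = b : the event is empty
    have hxc : ∀ j, x j = a := fun j => le_antisymm (heq ▸ (hx j).2) (hx j).1
    have hμa : μ = a := by
      rw [hμ]
      rw [Finset.sum_congr rfl fun j _ => hxc j, Finset.sum_const]
      simp
      field_simp
    have hset : {σ : Fin l ↪ Fin n | (l : ℝ) * t ≤ |(∑ i, x (σ i)) - (l : ℝ) * μ|} = ∅ := by
      ext σ
      simp only [Set.mem_setOf_eq, Set.mem_empty_iff_false, iff_false, not_le]
      have hsum : ∑ i, x (σ i) = (l : ℝ) * μ := by
        rw [Finset.sum_congr rfl fun i _ => hxc (σ i), Finset.sum_const, hμa]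
        simp [mul_comm]
      rw [hsum]
      simp only [sub_self, abs_zero]
      positivity
    rw [hset]
    simp only [measure_empty]
    exact zero_le
  · -- main case a < b
    have hba : 0 < b - a := sub_pos.2 hab
    set P : (Fin l ↪ Fin n) → Prop :=
      fun σ => (l : ℝ) * t ≤ |(∑ i, x (σ i)) - (l : ℝ) * μ| with hP
    have hmeas : MeasurableSet {σ : Fin l ↪ Fin n | P σ} := trivial
    rw [PMF.toMeasure_uniformOfFintype_apply _ hmeas]
    have hΩ : Fintype.card (Fin l ↪ Fin n) = n.descFactorial l := by
      simp [Fintype.card_embedding_eq]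
    have hcS : Fintype.card {σ : Fin l ↪ Fin n | P σ} = (univ.filter P).card := by
      rw [← Set.toFinset_card, Set.toFinset_setOf]
    -- the two one-sided events
    have hx' : ∀ j, -x j ∈ Set.Icc (-b) (-a) := by
      intro j
      exact ⟨by linarith [(hx j).2], by linarith [(hx j).1]⟩
    have hμ' : -μ = (1 / (n : ℝ)) * ∑ j, -x j := by
      rw [Finset.sum_neg_distrib, hμ]
      ring
    have hplus := one_side n l hn hl hln a b hab x hx μ hμ t ht
    have hminus := one_side n l hn hl hln (-b) (-a) (by linarith) (fun j => -x j) hx'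
      (-μ) hμ' t ht
    have hba2 : ((-a) - (-b) : ℝ) = b - a := by ring
    rw [hba2] at hminus
    -- subset of union
    have hsub : univ.filter P ⊆
        (univ.filter fun σ : Fin l ↪ Fin n => (l : ℝ) * t ≤ (∑ i, x (σ i)) - (l : ℝ) * μ) ∪
        (univ.filter fun σ : Fin l ↪ Fin n =>
          (l : ℝ) * t ≤ (∑ i, (fun j => -x j) (σ i)) - (l : ℝ) * (-μ)) := by
      intro σ hσ
      have hcond := (Finset.mem_filter.1 hσ).2
      rw [hP] at hcond
      rcases le_abs.1 hcond with h1 | h1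
      · exact Finset.mem_union_left _ (Finset.mem_filter.2 ⟨Finset.mem_univ _, h1⟩)
      · refine Finset.mem_union_right _ (Finset.mem_filter.2 ⟨Finset.mem_univ _, ?_⟩)
        rw [Finset.sum_neg_distrib]
        linarith
    have hcard : ((univ.filter P).card : ℝ) ≤
        (n.descFactorial l : ℝ) *
          (2 * Real.exp (-2 * (l : ℝ) * t ^ 2 / (b - a) ^ 2)) := by
      have h1 : (univ.filter P).card ≤ _ + _ :=
        (Finset.card_le_card hsub).trans (Finset.card_union_le _ _)
      calc ((univ.filter P).card : ℝ)
          ≤ ((univ.filter fun σ : Fin l ↪ Fin n =>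
                (l : ℝ) * t ≤ (∑ i, x (σ i)) - (l : ℝ) * μ).card : ℝ) +
            ((univ.filter fun σ : Fin l ↪ Fin n =>
                (l : ℝ) * t ≤ (∑ i, (fun j => -x j) (σ i)) - (l : ℝ) * (-μ)).card : ℝ) := by
              exact_mod_cast Nat.cast_le.2 h1
        _ ≤ (n.descFactorial l : ℝ) * Real.exp (-2 * (l : ℝ) * t ^ 2 / (b - a) ^ 2) +
            (n.descFactorial l : ℝ) * Real.exp (-2 * (l : ℝ) * t ^ 2 / (b - a) ^ 2) :=
              add_le_add hplus hminus
        _ = (n.descFactorial l : ℝ) *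
              (2 * Real.exp (-2 * (l : ℝ) * t ^ 2 / (b - a) ^ 2)) := by ring
    -- conclude in ℝ≥0∞
    set R : ℝ := 2 * Real.exp (-2 * (l : ℝ) * t ^ 2 / (b - a) ^ 2) with hR
    have hR0 : 0 ≤ R := by positivity
    rw [hcS, hΩ]
    apply ENNReal.div_le_of_le_mul
    calc ((univ.filter P).card : ℝ≥0∞)
        = ENNReal.ofReal ((univ.filter P).card : ℝ) := by
          rw [ENNReal.ofReal_natCast]
      _ ≤ ENNReal.ofReal (R * (n.descFactorial l : ℝ)) := by
          apply ENNReal.ofReal_le_ofReal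
          calc ((univ.filter P).card : ℝ) ≤ (n.descFactorial l : ℝ) * R := hcard
            _ = R * (n.descFactorial l : ℝ) := by ring
      _ = ENNReal.ofReal R * ENNReal.ofReal ((n.descFactorial l : ℝ)) :=
          ENNReal.ofReal_mul hR0
      _ = ENNReal.ofReal R * (n.descFactorial l : ℝ≥0∞) := by
          rw [ENNReal.ofReal_natCast]
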